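/- Let a, b, c ∈ ℂ with a ≠ 0. Define Hermitian forms on ℂ² by q_e(x₁,x₂) := 2|a|²|x₂|² + 2·Re( conj(a·x₂)·b·x₁ ) + (|a|²+|c|²)·|x₁|² and q_d(x₁,x₂) := (|a|²−|c|²)·|x₂|² + 2·Re( conj(a·x₂)·b·x₁ ) − 2·Re( conj(b·x₂)·c·x₁ ) + (|a|²−|c|²)·|x₁|². Then for every sequence v : ℕ → ℂ and every n ∈ ℕ, 2·Re( conj(2a·v(n+2) + b·v(n+1)) · (a·v(n+2) + b·v(n+1) + c·v(n)) ) = 2·|a·v(n+2) + b·v(n+1) + c·v(n)|² + q_e(v(n+1),v(n+2)) − q_e(v(n),v(n+1)) + q_d(v(n),v(n+1)). -/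

import Mathlib

/-- The energy form for the degree-2 polynomial `P = aX² + bX + c`. -/
noncomputable def qe (a b c x₁ x₂ : ℂ) : ℝ :=
  2 * ‖a‖ ^ 2 * ‖x₂‖ ^ 2
    + 2 * ((starRingEnd ℂ) (a * x₂) * (b * x₁)).re
    + (‖a‖ ^ 2 + ‖c‖ ^ 2) * ‖x₁‖ ^ 2

/-- The dissipation form for the degree-2 polynomial `P = aX² + bX + c`. -/
noncomputable def qd (a b c x₁ x₂ : ℂ) : ℝ :=
  (‖a‖ ^ 2 - ‖c‖ ^ 2) * ‖x₂‖ ^ 2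
    + 2 * ((starRingEnd ℂ) (a * x₂) * (b * x₁)).re
    - 2 * ((starRingEnd ℂ) (b * x₂) * (c * x₁)).re
    + (‖a‖ ^ 2 - ‖c‖ ^ 2) * ‖x₁‖ ^ 2

/-- the energy-dissipation balance law for second order recurrence
relations, `2 Re( conj(T P'(T)v(n)) · P(T)v(n) ) = 2|P(T)v(n)|² + qe(v(n+1),v(n+2))
− qe(v(n),v(n+1)) + qd(v(n),v(n+1))`. -/
theorem stmt_8 (a b c : ℂ) (ha : a ≠ 0) (v : ℕ → ℂ) (n : ℕ) :
    2 * ((starRingEnd ℂ) (2 * a * v (n + 2) + b * v (n + 1))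
          * (a * v (n + 2) + b * v (n + 1) + c * v n)).re
    = 2 * ‖a * v (n + 2) + b * v (n + 1) + c * v n‖ ^ 2
      + qe a b c (v (n + 1)) (v (n + 2)) - qe a b c (v n) (v (n + 1))
      + qd a b c (v n) (v (n + 1)) := by
  simp only [qe, qd, Complex.sq_norm, Complex.normSq_apply, Complex.mul_re, Complex.mul_im,
    Complex.add_re, Complex.add_im, Complex.conj_re, Complex.conj_im, map_add, map_mul,
    Complex.re_ofNat, Complex.im_ofNat, map_ofNat]
  ring
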